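/- Let r ≥ 2 be an integer, let λ > 0, let ε > 0, set b_c = (1 - 1/r)·((r-1)!/λ)^{1/(r-1)}, and suppose a ≥ (1+ε)·b_c. Define the sequence x_0 = a and x_{t+1} = λ·x_t^r/r! + a for t ≥ 0. Then x_t → ∞ as t → ∞. -/

import Mathlib

open Filter

/-- The critical value `b_c = (1 - 1/r) · ((r-1)!/λ)^(1/(r-1))` for the one-step
infection recursion `f(x) = λ x^r / r! + a` of bootstrap percolation. -/
noncomputable def bcrit (r : ℕ) (lam : ℝ) : ℝ :=
  (1 - 1 / (r : ℝ)) * (((r - 1).factorial : ℝ) / lam) ^ ((1 : ℝ) / ((r : ℝ) - 1))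

/-- **Supercritical recursion diverges.** If `a ≥ (1+ε) b_c` with `ε > 0`, then the
recursion `x₀ = a`, `x_{t+1} = λ x_t^r / r! + a` tends to infinity. -/
theorem infection_recursion_supercritical_diverges
    (r : ℕ) (hr : 2 ≤ r) (lam : ℝ) (hlam : 0 < lam) (ε : ℝ) (hε : 0 < ε)
    (a : ℝ) (hsup : (1 + ε) * bcrit r lam ≤ a)
    (x : ℕ → ℝ) (hx0 : x 0 = a)
    (hxs : ∀ t, x (t + 1) = lam * (x t) ^ r / (r.factorial : ℝ) + a) :
    Tendsto x atTop atTop := by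
  have hrR : (2:ℝ) ≤ (r:ℝ) := by exact_mod_cast hr
  set c : ℝ := (((r - 1).factorial : ℝ) / lam) ^ ((1 : ℝ) / ((r : ℝ) - 1)) with hc
  have hbase : 0 < ((r-1).factorial : ℝ)/lam := div_pos (by positivity) hlam
  have hcpos : 0 < c := Real.rpow_pos_of_pos hbase _
  have hrne : (r:ℝ) - 1 ≠ 0 := by linarith
  have hcast : ((r-1 : ℕ):ℝ) = (r:ℝ) - 1 := by
    push_cast [Nat.cast_sub (by omega : 1 ≤ r)]; ring
  have hcr : c ^ (r - 1) = ((r-1).factorial : ℝ) / lam := by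
    rw [hc, ← Real.rpow_natCast _ (r-1), ← Real.rpow_mul hbase.le, hcast,
      one_div, inv_mul_cancel₀ hrne, Real.rpow_one]
  have hB : bcrit r lam = (1 - 1/(r:ℝ)) * c := rfl
  have hBpos : 0 < bcrit r lam := by
    rw [hB]
    have : (1:ℝ)/(r:ℝ) < 1 := by
      rw [div_lt_one (by linarith : (0:ℝ) < r)]; linarith
    have h1 : (0:ℝ) < 1 - 1/(r:ℝ) := by linarith
    exact mul_pos h1 hcpos
  have hfac : (r.factorial : ℝ) = (r:ℝ) * ((r-1).factorial : ℝ) := by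
    rw [← Nat.cast_mul, Nat.mul_factorial_pred (by omega : r ≠ 0)]
  have hrpos : (0:ℝ) < (r:ℝ) := by linarith
  have hfacpos : (0:ℝ) < ((r-1).factorial : ℝ) := by positivity
  -- key one-variable inequality
  have key : ∀ y : ℝ, 0 ≤ y → y ≤ lam * y ^ r / (r.factorial : ℝ) + bcrit r lam := by
    intro y hy
    set u : ℝ := y / c with hu
    have hupos : 0 ≤ u := div_nonneg hy hcpos.le
    have hyu : y = u * c := by rw [hu, div_mul_cancel₀ _ (ne_of_gt hcpos)]
    have hpowc : c ^ r = c ^ (r-1) * c := by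
      rw [← pow_succ]; congr 1; omega
    have hterm : lam * y ^ r / (r.factorial : ℝ) = u ^ r * c / (r:ℝ) := by
      rw [hyu, mul_pow, hfac, hpowc, hcr]
      field_simp
    rw [hterm, hyu, hB]
    have hber : 1 + (r:ℝ) * (u - 1) ≤ u ^ r := by
      have := one_add_mul_le_pow (by linarith : (-2:ℝ) ≤ u - 1) r
      simpa [show (1:ℝ) + (u-1) = u by ring] using this
    rw [div_add' _ _ _ (ne_of_gt hrpos), le_div_iff₀ hrpos] at *
    nlinarith [mul_le_mul_of_nonneg_right hber hcpos.le, one_div_mul_cancel (ne_of_gt hrpos)]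
  -- lower bound by induction
  set B := bcrit r lam with hBdef
  have hlow : ∀ t : ℕ, a + (t:ℝ) * (ε * B) ≤ x t := by
    intro t
    induction t with
    | zero => simp [hx0]
    | succ t ih =>
      have hxt : 0 ≤ x t := by
        have : (0:ℝ) ≤ a := by nlinarith
        have : (0:ℝ) ≤ (t:ℝ) * (ε * B) := by positivity
        linarith [ih]
      have hk := key (x t) hxt
      rw [hxs t]
      push_cast
      nlinarith [ih]
  have hlin : Tendsto (fun t : ℕ => a + (t:ℝ) * (ε * B)) atTop atTop := by
    apply tendsto_atTop_add_const_left
    exact Tendsto.atTop_mul_const (by positivity) tendsto_natCast_atTop_atTop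
  exact tendsto_atTop_mono hlow hlin
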